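/- Let J ⊆ ℤ be an interval of integers (finite or infinite) and assume the equation x(k+1) = A(k)x(k) has an exponential dichotomy on J with constants K, α and projection P(k). Then there exist real n×n matrices Ã(k) defined for all k ∈ ℤ, with Ã(k) = A(k) whenever k and k+1 both lie in J, such that the equation x(k+1) = Ã(k)x(k) has an exponential dichotomy on all of ℤ with the same constant K and exponent α, and with a projection family P̃(k) satisfying P̃(k) = P(k) for k ∈ J. -/

import Mathlib

noncomputable section

open scoped BigOperators

/-- ℝⁿ as a Euclidean space. -/
abbrev Euc (n : ℕ) := EuclideanSpace ℝ (Fin n)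

/-- The transition matrix `Φ(k,m) = A(k-1) ⋯ A(m)`, with `Φ(m,m) = 1`
(and `Φ(k,m) = 1` when `k ≤ m`). -/
def Phi {n : ℕ} (A : ℤ → (Euc n →L[ℝ] Euc n)) (k m : ℤ) : Euc n →L[ℝ] Euc n :=
  (((List.range (k - m).toNat).map fun i => A (m + i)).reverse).prod

/-- `J` is an interval of integers. -/
def IsIntInterval (J : Set ℤ) : Prop :=
  ∀ ⦃a b c : ℤ⦄, a ∈ J → b ∈ J → a ≤ c → c ≤ b → c ∈ J

/-- The equation `x(k+1) = A(k) x(k)` has an exponential dichotomy on `J` with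
projection family `P`, constant `K` and exponent `α`. -/
structure ExpDichotomyOn {n : ℕ} (A : ℤ → (Euc n →L[ℝ] Euc n)) (J : Set ℤ)
    (P : ℤ → (Euc n →L[ℝ] Euc n)) (K α : ℝ) : Prop where
  one_le_K : 1 ≤ K
  alpha_pos : 0 < α
  proj : ∀ k ∈ J, P k ∘L P k = P k
  rank_const : ∀ k ∈ J, ∀ m ∈ J,
    Module.finrank ℝ (LinearMap.range (P k : Euc n →ₗ[ℝ] Euc n)) = Module.finrank ℝ (LinearMap.range (P m : Euc n →ₗ[ℝ] Euc n))
  invariance : ∀ m ∈ J, ∀ k ∈ J, m ≤ k → Phi A k m ∘L P m = P k ∘L Phi A k m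
  forward : ∀ m ∈ J, ∀ k ∈ J, m ≤ k →
    ‖Phi A k m ∘L P m‖ ≤ K * Real.exp (-α * ((k : ℝ) - (m : ℝ)))
  bijOn : ∀ k : ℤ, k ∈ J → k + 1 ∈ J →
    Set.BijOn (A k) (LinearMap.ker (P k : Euc n →ₗ[ℝ] Euc n) : Set (Euc n)) (LinearMap.ker (P (k + 1) : Euc n →ₗ[ℝ] Euc n) : Set (Euc n))
  backward : ∃ Ψ : ℤ → ℤ → (Euc n →L[ℝ] Euc n), ∀ m ∈ J, ∀ k ∈ J, m ≤ k →
    (∀ x ∈ LinearMap.ker (P m : Euc n →ₗ[ℝ] Euc n), Ψ m k (Phi A k m x) = x) ∧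
    (∀ x ∈ LinearMap.ker (P k : Euc n →ₗ[ℝ] Euc n), Ψ m k x ∈ LinearMap.ker (P m : Euc n →ₗ[ℝ] Euc n) ∧ Phi A k m (Ψ m k x) = x) ∧
    ‖Ψ m k ∘L (1 - P k)‖ ≤ K * Real.exp (-α * ((k : ℝ) - (m : ℝ)))

section Aux18
variable {n : ℕ}

lemma norm_exp_smul_le (c : ℝ) (T : Euc n →L[ℝ] Euc n) :
    ‖Real.exp c • T‖ ≤ Real.exp c * ‖T‖ := by
  refine ContinuousLinearMap.opNorm_le_bound _ (by positivity) fun x => ?_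
  rw [ContinuousLinearMap.smul_apply, norm_smul, Real.norm_eq_abs, Real.abs_exp, mul_assoc]
  gcongr
  exact T.le_opNorm x

lemma exp_mul_bound {K u v w : ℝ} (h : u + v = w) :
    Real.exp u * (K * Real.exp v) = K * Real.exp w := by
  rw [← h, Real.exp_add]; ring

lemma exp_smul_collapse {u v : ℝ} (h : u + v = 0) (x : Euc n) :
    Real.exp u • Real.exp v • x = x := by
  rw [smul_smul, ← Real.exp_add, h, Real.exp_zero, one_smul]

lemma Phi_of_le (A : ℤ → (Euc n →L[ℝ] Euc n)) {k m : ℤ} (h : k ≤ m) : Phi A k m = 1 := by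
  unfold Phi
  rw [Int.toNat_of_nonpos (by omega)]
  simp

lemma Phi_refl (A : ℤ → (Euc n →L[ℝ] Euc n)) (m : ℤ) : Phi A m m = 1 := Phi_of_le A le_rfl

lemma Phi_succ (A : ℤ → (Euc n →L[ℝ] Euc n)) {k m : ℤ} (h : m ≤ k) :
    Phi A (k+1) m = A k ∘L Phi A k m := by
  unfold Phi
  have h1 : (k + 1 - m).toNat = (k - m).toNat + 1 := by omega
  have h2 : m + ((k - m).toNat : ℤ) = k := by omega
  rw [h1, List.range_succ]
  simp [h2]
  rw [show m + ((k-m) ⊔ 0) = k by omega]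
  rfl

lemma Phi_comp (A : ℤ → (Euc n →L[ℝ] Euc n)) {k p m : ℤ} (h1 : m ≤ p) (h2 : p ≤ k) :
    Phi A k m = Phi A k p ∘L Phi A p m := by
  refine Int.le_induction (motive := fun k _ => Phi A k m = Phi A k p ∘L Phi A p m) ?_ ?_ k h2
  · rw [Phi_refl]; ext x; simp
  · intro k hk ih
    rw [Phi_succ A (le_trans h1 hk), Phi_succ A hk, ih, ContinuousLinearMap.comp_assoc]

lemma Phi_congr {A B : ℤ → (Euc n →L[ℝ] Euc n)} {k m : ℤ} (h : m ≤ k)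
    (hAB : ∀ i, m ≤ i → i < k → A i = B i) : Phi A k m = Phi B k m := by
  refine Int.le_induction
    (motive := fun k _ => (∀ i, m ≤ i → i < k → A i = B i) → Phi A k m = Phi B k m) ?_ ?_ k h hAB
  · intro _; rw [Phi_refl, Phi_refl]
  · intro k hk ih hAB'
    rw [Phi_succ A hk, Phi_succ B hk, hAB' k hk (by omega),
      ih (fun i hi1 hi2 => hAB' i hi1 (by omega))]

open ContinuousLinearMap in
lemma inv_of_step {B Pt : ℤ → (Euc n →L[ℝ] Euc n)}
    (hstep : ∀ k, B k ∘L Pt k = Pt (k+1) ∘L B k) {m k : ℤ} (h : m ≤ k) :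
    Phi B k m ∘L Pt m = Pt k ∘L Phi B k m := by
  refine Int.le_induction (motive := fun k _ => Phi B k m ∘L Pt m = Pt k ∘L Phi B k m) ?_ ?_ k h
  · rw [Phi_refl]; ext x; simp
  · intro k hk ih
    rw [Phi_succ B hk, comp_assoc, ih, ← comp_assoc, hstep, comp_assoc]

/-- extension coefficient on the pure region -/
def Qmap (α : ℝ) (p : Euc n →L[ℝ] Euc n) : Euc n →L[ℝ] Euc n :=
  Real.exp (-α) • p + Real.exp α • (1 - p)

/-- inverse transition on the pure region -/
def Emap (α : ℝ) (d : ℤ) (p : Euc n →L[ℝ] Euc n) : Euc n →L[ℝ] Euc n :=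
  Real.exp (α * d) • p + Real.exp (-(α * d)) • (1 - p)

section proj
variable {p : Euc n →L[ℝ] Euc n} (hp : p ∘L p = p) {α : ℝ} {d : ℤ}

lemma Qmap_comp_p (hp : p ∘L p = p) : Qmap α p ∘L p = Real.exp (-α) • p := by
  ext x
  have hpx : p (p x) = p x := by
    have := DFunLike.congr_fun hp x; simpa using this
  simp [Qmap, hpx]

lemma p_comp_Qmap (hp : p ∘L p = p) : p ∘L Qmap α p = Real.exp (-α) • p := by
  ext x
  have hpx : p (p x) = p x := by
    have := DFunLike.congr_fun hp x; simpa using this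
  simp [Qmap, hpx]

lemma Qmap_comp_q (hp : p ∘L p = p) : Qmap α p ∘L (1 - p) = Real.exp α • (1 - p) := by
  ext x
  have hpx : p (p x) = p x := by
    have := DFunLike.congr_fun hp x; simpa using this
  simp [Qmap, hpx]

lemma Emap_comp_q (hp : p ∘L p = p) :
    Emap α d p ∘L (1 - p) = Real.exp (-(α * d)) • (1 - p) := by
  ext x
  have hpx : p (p x) = p x := by
    have := DFunLike.congr_fun hp x; simpa using this
  simp [Emap, hpx]

lemma Emap_apply_ker {x : Euc n} (hx : p x = 0) :
    Emap α d p x = Real.exp (-(α * d)) • x := by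
  simp [Emap, hx]

lemma Qmap_apply_ker {x : Euc n} (hx : p x = 0) : Qmap α p x = Real.exp α • x := by
  simp [Qmap, hx]
end proj

open ContinuousLinearMap in
lemma Phi_Q_proj {B : ℤ → (Euc n →L[ℝ] Euc n)} {p : Euc n →L[ℝ] Euc n} {α : ℝ}
    (hp : p ∘L p = p) {m k : ℤ} (h : m ≤ k)
    (hB : ∀ i, m ≤ i → i < k → B i = Qmap α p) :
    Phi B k m ∘L p = Real.exp (-(α * ((k : ℝ) - (m : ℝ)))) • p := by
  refine Int.le_induction
    (motive := fun k _ => (∀ i, m ≤ i → i < k → B i = Qmap α p) →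
      Phi B k m ∘L p = Real.exp (-(α * ((k : ℝ) - (m : ℝ)))) • p) ?_ ?_ k h hB
  · intro _; rw [Phi_refl]; ext x; simp
  · intro k hk ih hB'
    rw [Phi_succ B hk, comp_assoc, ih (fun i h1 h2 => hB' i h1 (by omega)),
      comp_smul, hB' k hk (by omega), Qmap_comp_p hp, smul_smul, ← Real.exp_add]
    congr 2
    push_cast
    ring

open ContinuousLinearMap in
lemma Phi_Q_ker {B : ℤ → (Euc n →L[ℝ] Euc n)} {p : Euc n →L[ℝ] Euc n} {α : ℝ}
    (hp : p ∘L p = p) {m k : ℤ} (h : m ≤ k)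
    (hB : ∀ i, m ≤ i → i < k → B i = Qmap α p) :
    Phi B k m ∘L (1 - p) = Real.exp (α * ((k : ℝ) - (m : ℝ))) • (1 - p) := by
  refine Int.le_induction
    (motive := fun k _ => (∀ i, m ≤ i → i < k → B i = Qmap α p) →
      Phi B k m ∘L (1 - p) = Real.exp (α * ((k : ℝ) - (m : ℝ))) • (1 - p)) ?_ ?_ k h hB
  · intro _; rw [Phi_refl]; ext x; simp
  · intro k hk ih hB'
    rw [Phi_succ B hk, comp_assoc, ih (fun i h1 h2 => hB' i h1 (by omega)),
      comp_smul, hB' k hk (by omega), Qmap_comp_q hp, smul_smul, ← Real.exp_add]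
    congr 2
    push_cast
    ring

lemma Phi_Q_apply_ker {B : ℤ → (Euc n →L[ℝ] Euc n)} {p : Euc n →L[ℝ] Euc n} {α : ℝ}
    (hp : p ∘L p = p) {m k : ℤ} (h : m ≤ k)
    (hB : ∀ i, m ≤ i → i < k → B i = Qmap α p) {x : Euc n} (hx : p x = 0) :
    Phi B k m x = Real.exp (α * ((k : ℝ) - (m : ℝ))) • x := by
  have h1 : (1 - p) x = x := by simp [hx]
  have := DFunLike.congr_fun (Phi_Q_ker hp h hB) x
  simp only [ContinuousLinearMap.comp_apply, h1] at this
  rw [this]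
  simp [hx]


section clamp
variable {J : Set ℤ}

lemma exists_clamp (hne : J.Nonempty) (k : ℤ) :
    ∃ j, j ∈ J ∧ ∀ j' ∈ J, (k - j).natAbs ≤ (k - j').natAbs := by
  classical
  obtain ⟨j0, hj0⟩ := hne
  have hex : ∃ d : ℕ, ∃ j ∈ J, (k - j).natAbs = d := ⟨_, j0, hj0, rfl⟩
  obtain ⟨j, hj, hjd⟩ := Nat.find_spec hex
  exact ⟨j, hj, fun j' hj' => hjd ▸ Nat.find_le ⟨j', hj', rfl⟩⟩

noncomputable def clamp (hne : J.Nonempty) (k : ℤ) : ℤ := (exists_clamp hne k).choose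

lemma clamp_mem (hne : J.Nonempty) (k : ℤ) : clamp hne k ∈ J :=
  (exists_clamp hne k).choose_spec.1

lemma clamp_min_dist (hne : J.Nonempty) (k : ℤ) :
    ∀ j' ∈ J, (k - clamp hne k).natAbs ≤ (k - j').natAbs :=
  (exists_clamp hne k).choose_spec.2

lemma clamp_of_mem (hne : J.Nonempty) {k : ℤ} (hk : k ∈ J) : clamp hne k = k := by
  have := clamp_min_dist hne k k hk
  omega

lemma clamp_eq_of_min (hne : J.Nonempty) {k x : ℤ} (hk : ∀ j ∈ J, k ≤ j)
    (hx : x ∈ J) (hxmin : ∀ j ∈ J, x ≤ j) : clamp hne k = x := by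
  have h1 := clamp_mem hne k
  have h2 := clamp_min_dist hne k x hx
  have h3 := hxmin _ h1
  have h4 := hk _ h1
  have h5 := hk _ hx
  omega

lemma clamp_eq_of_max (hne : J.Nonempty) {k x : ℤ} (hk : ∀ j ∈ J, j ≤ k)
    (hx : x ∈ J) (hxmax : ∀ j ∈ J, j ≤ x) : clamp hne k = x := by
  have h1 := clamp_mem hne k
  have h2 := clamp_min_dist hne k x hx
  have h3 := hxmax _ h1
  have h4 := hk _ h1
  have h5 := hk _ hx
  omega

lemma interval_trichotomy (hJ : IsIntInterval J) (k : ℤ) :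
    k ∈ J ∨ (∀ j ∈ J, k < j) ∨ (∀ j ∈ J, j < k) := by
  by_cases hk : k ∈ J
  · exact Or.inl hk
  by_cases hb : ∃ j ∈ J, j < k
  · obtain ⟨j1, hj1, hj1k⟩ := hb
    refine Or.inr (Or.inr fun j hj => ?_)
    by_contra hcon
    exact hk (hJ hj1 hj (by omega) (by omega))
  · refine Or.inr (Or.inl fun j hj => ?_)
    rcases lt_or_ge k j with h | h
    · exact h
    · rcases eq_or_lt_of_le h with rfl | h'
      · exact absurd hj hk
      · exact absurd ⟨j, hj, h'⟩ hb

lemma exists_least (hne : J.Nonempty) (hb : ∃ b : ℤ, ∀ j ∈ J, b ≤ j) :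
    ∃ a ∈ J, ∀ j ∈ J, a ≤ j := by
  obtain ⟨b, hb⟩ := hb
  obtain ⟨lb, h1, h2⟩ := Int.exists_least_of_bdd (P := fun z => z ∈ J) ⟨b, hb⟩ hne
  exact ⟨lb, h1, h2⟩

lemma exists_greatest (hne : J.Nonempty) (hb : ∃ b : ℤ, ∀ j ∈ J, j ≤ b) :
    ∃ a ∈ J, ∀ j ∈ J, j ≤ a := by
  obtain ⟨b, hb⟩ := hb
  obtain ⟨ub, h1, h2⟩ := Int.exists_greatest_of_bdd (P := fun z => z ∈ J) ⟨b, hb⟩ hne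
  exact ⟨ub, h1, h2⟩

lemma clamp_succ (hJ : IsIntInterval J) (hne : J.Nonempty) {k : ℤ}
    (hcon : ¬(k ∈ J ∧ k + 1 ∈ J)) : clamp hne k = clamp hne (k + 1) := by
  by_cases hk : k ∈ J
  · have hk1 : k + 1 ∉ J := fun h => hcon ⟨hk, h⟩
    have hmax : ∀ j ∈ J, j ≤ k := by
      intro j hj
      by_contra h
      exact hk1 (hJ hk hj (by omega) (by omega))
    rw [clamp_of_mem hne hk, clamp_eq_of_max hne (fun j hj => by have := hmax j hj; omega) hk hmax]
  by_cases hk1 : k + 1 ∈ J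
  · have hmin : ∀ j ∈ J, k + 1 ≤ j := by
      intro j hj
      by_contra h
      exact hk (hJ hj hk1 (by omega) (by omega))
    rw [clamp_of_mem hne hk1, clamp_eq_of_min hne (fun j hj => by have := hmin j hj; omega) hk1 hmin]
  rcases interval_trichotomy hJ k with h | h | h
  · exact absurd h hk
  · obtain ⟨a, ha, hamin⟩ := exists_least hne ⟨k, fun j hj => (h j hj).le⟩
    have h1 : ∀ j ∈ J, k + 1 ≤ j := by
      intro j hj
      have := h j hj
      rcases eq_or_lt_of_le (by omega : k + 1 ≤ j) with rfl | h'
      · exact absurd hj hk1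
      · omega
    rw [clamp_eq_of_min hne (fun j hj => (h j hj).le) ha hamin,
      clamp_eq_of_min hne h1 ha hamin]
  · obtain ⟨b, hb, hbmax⟩ := exists_greatest hne ⟨k, fun j hj => (h j hj).le⟩
    rw [clamp_eq_of_max hne (fun j hj => (h j hj).le) hb hbmax,
      clamp_eq_of_max hne (fun j hj => by have := h j hj; omega) hb hbmax]

end clamp

end Aux18

/-- an exponential dichotomy on an interval `J` of integers (finite or
infinite) with constants `K`, `α` and projection `P` extends: there are coefficients
`Ã(k)`, agreeing with `A(k)` whenever `k` and `k+1` both lie in `J`, such that the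
extended equation has an exponential dichotomy on all of `ℤ` with the same constants
and with a projection family agreeing with `P` on `J`. -/
theorem statement18 {n : ℕ} (A P : ℤ → (Euc n →L[ℝ] Euc n)) (J : Set ℤ) (K α : ℝ)
    (hJ : IsIntInterval J)
    (hED : ExpDichotomyOn A J P K α) :
    ∃ Atil Ptil : ℤ → (Euc n →L[ℝ] Euc n),
      (∀ k : ℤ, k ∈ J → k + 1 ∈ J → Atil k = A k) ∧
      (∀ k ∈ J, Ptil k = P k) ∧
      ExpDichotomyOn Atil Set.univ Ptil K α := by
  classical
  obtain ⟨Ψ, hΨ⟩ := hED.backward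
  rcases J.eq_empty_or_nonempty with rfl | hne
  · -- empty interval
    refine ⟨fun _ => Qmap α (1 : Euc n →L[ℝ] Euc n), fun _ => (1 : Euc n →L[ℝ] Euc n),
      by simp, by simp, ?_⟩
    have hp1 : (1 : Euc n →L[ℝ] Euc n) ∘L (1 : Euc n →L[ℝ] Euc n) = 1 := by ext x; simp
    refine ⟨hED.one_le_K, hED.alpha_pos, fun _ _ => hp1, fun _ _ _ _ => rfl, ?_, ?_, ?_, ?_⟩
    · intro m _ k _ hmk
      ext x; simp
    · intro m _ k _ hmk
      have h1 := Phi_Q_proj (α := α) hp1 hmk (fun i _ _ => rfl)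
      rw [h1]
      refine le_trans (norm_exp_smul_le _ _) ?_
      calc Real.exp (-(α * ((k : ℝ) - (m : ℝ)))) * ‖(1 : Euc n →L[ℝ] Euc n)‖
          ≤ Real.exp (-(α * ((k : ℝ) - (m : ℝ)))) * 1 := by
            gcongr
            exact ContinuousLinearMap.norm_id_le
        _ ≤ K * Real.exp (-α * ((k : ℝ) - (m : ℝ))) := by
            rw [mul_one, neg_mul]
            nlinarith [Real.exp_pos (-(α * ((k : ℝ) - (m : ℝ)))), hED.one_le_K]
    · intro k _ _
      refine ⟨?_, ?_, ?_⟩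
      · intro x hx
        have hx0 : x = 0 := by simpa using hx
        simp [hx0]
      · intro x hx y hy h
        have hx0 : x = 0 := by simpa using hx
        have hy0 : y = 0 := by simpa using hy
        rw [hx0, hy0]
      · intro x hx
        have hx0 : x = 0 := by simpa using hx
        exact ⟨0, by simp, by simp [hx0]⟩
    · refine ⟨fun _ _ => 0, fun m _ k _ hmk => ⟨?_, ?_, ?_⟩⟩
      · intro x hx
        have hx0 : x = 0 := by simpa using hx
        simp [hx0]
      · intro x hx
        have hx0 : x = 0 := by simpa using hx
        refine ⟨by simp, by simp [hx0]⟩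
      · have h0 : ((0 : Euc n →L[ℝ] Euc n) ∘L ((1 : Euc n →L[ℝ] Euc n) - 1)) = 0 := by
          ext x; simp
        rw [h0, norm_zero]
        exact mul_nonneg (by linarith [hED.one_le_K]) (Real.exp_pos _).le
  · -- nonempty interval
    set At : ℤ → (Euc n →L[ℝ] Euc n) :=
      fun k => if k ∈ J ∧ k + 1 ∈ J then A k else Qmap α (P (clamp hne k)) with hAt
    set Pt : ℤ → (Euc n →L[ℝ] Euc n) := fun k => P (clamp hne k) with hPt
    have hcmem : ∀ k : ℤ, clamp hne k ∈ J := clamp_mem hne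
    have hAtJ : ∀ i : ℤ, i ∈ J → i + 1 ∈ J → At i = A i := by
      intro i h1 h2
      simp only [hAt]
      rw [if_pos ⟨h1, h2⟩]
    have hAtQ' : ∀ i : ℤ, ¬(i ∈ J ∧ i + 1 ∈ J) → At i = Qmap α (P (clamp hne i)) := by
      intro i h1
      simp only [hAt]
      rw [if_neg h1]
    have hPtc : ∀ k : ℤ, Pt k = P (clamp hne k) := fun k => by simp only [hPt]
    have hPtJ : ∀ k ∈ J, Pt k = P k := by
      intro k hk
      rw [hPtc, clamp_of_mem hne hk]
    have hPtproj : ∀ k : ℤ, Pt k ∘L Pt k = Pt k := fun k => hED.proj _ (hcmem k)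
    have hnormP : ∀ j ∈ J, ‖P j‖ ≤ K := by
      intro j hj
      have h := hED.forward j hj j hj le_rfl
      rw [Phi_refl] at h
      have h2 : (1 : Euc n →L[ℝ] Euc n) ∘L P j = P j := by ext x; simp
      rw [h2] at h
      have h3 : (-α * ((j : ℝ) - (j : ℝ))) = 0 := by ring
      rwa [h3, Real.exp_zero, mul_one] at h
    have hnormQ : ∀ j ∈ J, ‖1 - P j‖ ≤ K := by
      intro j hj
      obtain ⟨h1, h2, h3⟩ := hΨ j hj j hj le_rfl
      have he : Ψ j j ∘L (1 - P j) = 1 - P j := by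
        refine ContinuousLinearMap.ext fun y => ?_
        have hy : (1 - P j) y ∈ LinearMap.ker (P j : Euc n →ₗ[ℝ] Euc n) := by
          have hpy := DFunLike.congr_fun (hED.proj j hj) y
          simp only [ContinuousLinearMap.comp_apply] at hpy
          rw [LinearMap.mem_ker]
          simp [hpy]
        have h4 := h1 _ hy
        rw [Phi_refl] at h4
        simp only [ContinuousLinearMap.one_apply] at h4
        simpa using h4
      rw [he] at h3
      have h4 : (-α * ((j : ℝ) - (j : ℝ))) = 0 := by ring
      rwa [h4, Real.exp_zero, mul_one] at h3
    have hstep : ∀ k : ℤ, At k ∘L Pt k = Pt (k + 1) ∘L At k := by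
      intro k
      by_cases hk : k ∈ J ∧ k + 1 ∈ J
      · rw [hAtJ k hk.1 hk.2, hPtJ k hk.1, hPtJ (k+1) hk.2]
        have h1 := hED.invariance k hk.1 (k+1) hk.2 (by omega)
        have h2 : Phi A (k+1) k = A k := by
          rw [Phi_succ A le_rfl, Phi_refl]
          ext x; simp
        rwa [h2] at h1
      · have hcc := clamp_succ hJ hne hk
        rw [hAtQ' k hk, hPtc, hPtc, ← hcc, Qmap_comp_p (hED.proj _ (hcmem k)),
          p_comp_Qmap (hED.proj _ (hcmem k))]
    have hPhiJ : ∀ {m k : ℤ}, m ∈ J → k ∈ J → m ≤ k → Phi At k m = Phi A k m := by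
      intro m k hm hk h
      refine Phi_congr h (fun i h1 h2 => ?_)
      exact hAtJ i (hJ hm hk h1 (by omega)) (hJ hm hk (by omega) (by omega))
    have hcge : ∀ b, b ∈ J → (∀ j ∈ J, j ≤ b) → ∀ i, b ≤ i → clamp hne i = b :=
      fun b hb hbmax i hi => clamp_eq_of_max hne (fun j hj => le_trans (hbmax j hj) hi) hb hbmax
    have hcle : ∀ a, a ∈ J → (∀ j ∈ J, a ≤ j) → ∀ i, i ≤ a → clamp hne i = a :=
      fun a ha hamin i hi => clamp_eq_of_min hne (fun j hj => le_trans hi (hamin j hj)) ha hamin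
    have hAtQge : ∀ b, b ∈ J → (∀ j ∈ J, j ≤ b) → ∀ i, b ≤ i → At i = Qmap α (P b) := by
      intro b hb hbmax i hi
      have hni : ¬(i ∈ J ∧ i + 1 ∈ J) := by
        rintro ⟨h1, h2⟩
        have := hbmax _ h2
        omega
      rw [hAtQ' i hni, hcge b hb hbmax i hi]
    have hAtQlt : ∀ a, a ∈ J → (∀ j ∈ J, a ≤ j) → ∀ i, i < a → At i = Qmap α (P a) := by
      intro a ha hamin i hi
      have hni : ¬(i ∈ J ∧ i + 1 ∈ J) := by
        rintro ⟨h1, h2⟩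
        have := hamin _ h1
        omega
      rw [hAtQ' i hni, hcle a ha hamin i (by omega)]
    -- forward estimate when the left endpoint is in J
    have forwardI : ∀ m ∈ J, ∀ k : ℤ, m ≤ k →
        ‖Phi At k m ∘L P m‖ ≤ K * Real.exp (-α * ((k : ℝ) - (m : ℝ))) := by
      intro m hm k hmk
      rcases interval_trichotomy hJ k with hk | hk | hk
      · rw [hPhiJ hm hk hmk]
        exact hED.forward m hm k hk hmk
      · exact absurd (hk m hm) (by omega)
      · obtain ⟨b, hb, hbmax⟩ := exists_greatest hne ⟨k, fun j hj => (hk j hj).le⟩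
        have hmb : m ≤ b := hbmax m hm
        have hbk : b ≤ k := (hk b hb).le
        have hq := Phi_Q_proj (hED.proj b hb) hbk (fun i h1 _ => hAtQge b hb hbmax i h1)
        have h2 : Phi A b m ∘L P m = P b ∘L (Phi A b m ∘L P m) := by
          refine ContinuousLinearMap.ext fun x => ?_
          have h3 := DFunLike.congr_fun (hED.invariance m hm b hb hmb) (P m x)
          have h5 := DFunLike.congr_fun (hED.proj m hm) x
          simp only [ContinuousLinearMap.comp_apply] at h3 h5 ⊢
          rw [h5] at h3
          exact h3
        have hkey : Phi At k m ∘L P m = Real.exp (-(α * ((k : ℝ) - (b : ℝ)))) • (Phi A b m ∘L P m) := by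
          rw [Phi_comp At hmb hbk, hPhiJ hm hb hmb, ContinuousLinearMap.comp_assoc]
          nth_rewrite 1 [h2]
          rw [← ContinuousLinearMap.comp_assoc, hq, ContinuousLinearMap.smul_comp, ← h2]
        rw [hkey]
        refine le_trans (norm_exp_smul_le _ _) ?_
        calc Real.exp (-(α * ((k : ℝ) - (b : ℝ)))) * ‖Phi A b m ∘L P m‖
            ≤ Real.exp (-(α * ((k : ℝ) - (b : ℝ)))) * (K * Real.exp (-α * ((b : ℝ) - (m : ℝ)))) := by
              gcongr
              exact hED.forward m hm b hb hmb
          _ = K * Real.exp (-α * ((k : ℝ) - (m : ℝ))) := exp_mul_bound (by push_cast; ring)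
    refine ⟨At, Pt, fun k h1 h2 => hAtJ k h1 h2, hPtJ, ?_⟩
    refine ⟨hED.one_le_K, hED.alpha_pos, fun k _ => hPtproj k,
      fun k _ m _ => hED.rank_const _ (hcmem k) _ (hcmem m),
      fun m _ k _ hmk => inv_of_step hstep hmk, ?_, ?_, ?_⟩
    · -- forward
      intro m _ k _ hmk
      rcases interval_trichotomy hJ m with hm | hm | hm
      · rw [hPtJ m hm]
        exact forwardI m hm k hmk
      · -- m below J
        obtain ⟨a, ha, hamin⟩ := exists_least hne ⟨m, fun j hj => (hm j hj).le⟩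
        have hma : m < a := hm a ha
        have hPtm : Pt m = P a := by rw [hPtc, hcle a ha hamin m hma.le]
        by_cases hka : k < a
        · have hq := Phi_Q_proj (hED.proj a ha) hmk
            (fun i _ h2 => hAtQlt a ha hamin i (by omega))
          rw [hPtm, hq]
          refine le_trans (norm_exp_smul_le _ _) ?_
          calc Real.exp (-(α * ((k : ℝ) - (m : ℝ)))) * ‖P a‖
              ≤ Real.exp (-(α * ((k : ℝ) - (m : ℝ)))) * K :=
                mul_le_mul_of_nonneg_left (hnormP a ha) (Real.exp_pos _).le
            _ = K * Real.exp (-α * ((k : ℝ) - (m : ℝ))) := by rw [neg_mul]; ring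
        · push_neg at hka
          have hq1 := Phi_Q_proj (hED.proj a ha) hma.le
            (fun i _ h2 => hAtQlt a ha hamin i h2)
          have hkey : Phi At k m ∘L Pt m
              = Real.exp (-(α * ((a : ℝ) - (m : ℝ)))) • (Phi At k a ∘L P a) := by
            rw [hPtm, Phi_comp At hma.le hka, ContinuousLinearMap.comp_assoc, hq1,
              ContinuousLinearMap.comp_smul]
          rw [hkey]
          refine le_trans (norm_exp_smul_le _ _) ?_
          calc Real.exp (-(α * ((a : ℝ) - (m : ℝ)))) * ‖Phi At k a ∘L P a‖
              ≤ Real.exp (-(α * ((a : ℝ) - (m : ℝ)))) * (K * Real.exp (-α * ((k : ℝ) - (a : ℝ)))) := by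
                gcongr
                exact forwardI a ha k hka
            _ = K * Real.exp (-α * ((k : ℝ) - (m : ℝ))) := exp_mul_bound (by push_cast; ring)
      · -- m above J
        obtain ⟨b, hb, hbmax⟩ := exists_greatest hne ⟨m, fun j hj => (hm j hj).le⟩
        have hbm : b < m := hm b hb
        have hPtm : Pt m = P b := by rw [hPtc, hcge b hb hbmax m hbm.le]
        have hq := Phi_Q_proj (hED.proj b hb) hmk
          (fun i h1 _ => hAtQge b hb hbmax i (by omega))
        rw [hPtm, hq]
        refine le_trans (norm_exp_smul_le _ _) ?_
        calc Real.exp (-(α * ((k : ℝ) - (m : ℝ)))) * ‖P b‖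
            ≤ Real.exp (-(α * ((k : ℝ) - (m : ℝ)))) * K :=
              mul_le_mul_of_nonneg_left (hnormP b hb) (Real.exp_pos _).le
          _ = K * Real.exp (-α * ((k : ℝ) - (m : ℝ))) := by rw [neg_mul]; ring
    · -- bijOn
      intro k _ _
      by_cases hk : k ∈ J ∧ k + 1 ∈ J
      · rw [hAtJ k hk.1 hk.2, hPtJ k hk.1, hPtJ (k+1) hk.2]
        exact hED.bijOn k hk.1 hk.2
      · have e1 : At k = Qmap α (P (clamp hne k)) := hAtQ' k hk
        have e2 : Pt (k+1) = Pt k := by rw [hPtc, hPtc, ← clamp_succ hJ hne hk]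
        rw [e1, e2, hPtc]
        have hpp : ∀ x : Euc n, P (clamp hne k) (P (clamp hne k) x) = P (clamp hne k) x := by
          intro x
          have := DFunLike.congr_fun (hED.proj _ (hcmem k)) x
          simpa using this
        refine ⟨?_, ?_, ?_⟩
        · intro x hx
          have hx0 : P (clamp hne k) x = 0 := by
            simpa [LinearMap.mem_ker] using hx
          have h1 : Qmap α (P (clamp hne k)) x = Real.exp α • x := Qmap_apply_ker hx0
          simp only [Set.mem_setOf_eq, SetLike.mem_coe, LinearMap.mem_ker, ContinuousLinearMap.coe_coe, h1, map_smul, hx0,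
            smul_zero]
        · intro x hx y hy hxy
          have hx0 : P (clamp hne k) x = 0 := by simpa [LinearMap.mem_ker] using hx
          have hy0 : P (clamp hne k) y = 0 := by simpa [LinearMap.mem_ker] using hy
          rw [Qmap_apply_ker hx0, Qmap_apply_ker hy0] at hxy
          exact smul_right_injective _ (Real.exp_ne_zero α) hxy
        · intro y hy
          have hy0 : P (clamp hne k) y = 0 := by simpa [LinearMap.mem_ker] using hy
          refine ⟨Real.exp (-α) • y, ?_, ?_⟩
          · simp only [Set.mem_setOf_eq, SetLike.mem_coe, LinearMap.mem_ker, ContinuousLinearMap.coe_coe, map_smul, hy0,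
              smul_zero]
          · rw [Qmap_apply_ker (by rw [map_smul, hy0, smul_zero])]
            rw [smul_smul, ← Real.exp_add]
            simp
    · -- backward
      set Ψt : ℤ → ℤ → (Euc n →L[ℝ] Euc n) := fun m k =>
        if m ∈ J then
          (if k ∈ J then Ψ m k
           else Ψ m (clamp hne k) ∘L Emap α (k - clamp hne k) (P (clamp hne k)))
        else if ∃ j ∈ J, m < j then
          (if k ∈ J then Emap α (clamp hne m - m) (P (clamp hne m)) ∘L Ψ (clamp hne m) k
           else if ∃ j ∈ J, k < j then Emap α (k - m) (P (clamp hne m))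
           else Emap α (clamp hne m - m) (P (clamp hne m)) ∘L
             (Ψ (clamp hne m) (clamp hne k) ∘L Emap α (k - clamp hne k) (P (clamp hne k))))
        else Emap α (k - m) (P (clamp hne m)) with hΨtdef
      refine ⟨Ψt, ?_⟩
      have backI : ∀ m ∈ J, ∀ k : ℤ, m ≤ k →
          (∀ x ∈ LinearMap.ker (Pt m : Euc n →ₗ[ℝ] Euc n), Ψt m k (Phi At k m x) = x) ∧
          (∀ x ∈ LinearMap.ker (Pt k : Euc n →ₗ[ℝ] Euc n), Ψt m k x ∈ LinearMap.ker (Pt m : Euc n →ₗ[ℝ] Euc n) ∧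
            Phi At k m (Ψt m k x) = x) ∧
          ‖Ψt m k ∘L (1 - Pt k)‖ ≤ K * Real.exp (-α * ((k : ℝ) - (m : ℝ))) := by
        intro m hm k hmk
        rcases interval_trichotomy hJ k with hk | hk | hk
        · have hΨteq : Ψt m k = Ψ m k := by
            simp only [hΨtdef]
            rw [if_pos hm, if_pos hk]
          obtain ⟨h1, h2, h3⟩ := hΨ m hm k hk hmk
          rw [hΨteq, hPtJ m hm, hPtJ k hk, hPhiJ hm hk hmk]
          exact ⟨h1, h2, h3⟩
        · exact absurd (hk m hm) (by omega)
        · obtain ⟨b, hb, hbmax⟩ := exists_greatest hne ⟨k, fun j hj => (hk j hj).le⟩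
          have hmb : m ≤ b := hbmax m hm
          have hbk : b ≤ k := (hk b hb).le
          have hknJ : k ∉ J := fun h => absurd (hk k h) (lt_irrefl k)
          have hck : clamp hne k = b := hcge b hb hbmax k hbk
          have hPtk : Pt k = P b := by rw [hPtc, hck]
          have hΨteq : Ψt m k = Ψ m b ∘L Emap α (k - b) (P b) := by
            simp only [hΨtdef]
            rw [if_pos hm, if_neg hknJ, hck]
          have hsplit : Phi At k m = Phi At k b ∘L Phi A b m := by
            rw [Phi_comp At hmb hbk, hPhiJ hm hb hmb]
          have hQker : ∀ x : Euc n, P b x = 0 →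
              Phi At k b x = Real.exp (α * ((k : ℝ) - (b : ℝ))) • x :=
            fun x hx => Phi_Q_apply_ker (hED.proj b hb) hbk
              (fun i h1 _ => hAtQge b hb hbmax i h1) hx
          obtain ⟨hb1, hb2, hb3⟩ := hΨ m hm b hb hmb
          refine ⟨?_, ?_, ?_⟩
          · intro x hx
            have hx0 : P m x = 0 := by
              rw [hPtJ m hm] at hx
              exact LinearMap.mem_ker.mp hx
            have hy0 : P b (Phi A b m x) = 0 := by
              have h4 := DFunLike.congr_fun (hED.invariance m hm b hb hmb) x
              simp only [ContinuousLinearMap.comp_apply] at h4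
              rw [← h4, hx0, map_zero]
            rw [hΨteq, hsplit]
            simp only [ContinuousLinearMap.comp_apply]
            rw [hQker _ hy0, map_smul, Emap_apply_ker hy0,
              exp_smul_collapse (by push_cast; ring)]
            exact hb1 _ (LinearMap.mem_ker.mpr hx0)
          · intro x hx
            have hx0 : P b x = 0 := by
              rw [hPtk] at hx
              exact LinearMap.mem_ker.mp hx
            obtain ⟨hxk, hxk2⟩ := hb2 x (LinearMap.mem_ker.mpr hx0)
            rw [hΨteq]
            simp only [ContinuousLinearMap.comp_apply]
            rw [Emap_apply_ker hx0, map_smul (Ψ m b)]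
            constructor
            · rw [hPtJ m hm]
              exact Submodule.smul_mem _ _ hxk
            · rw [hsplit]
              simp only [ContinuousLinearMap.comp_apply]
              rw [map_smul (Phi A b m), hxk2, map_smul (Phi At k b), hQker _ hx0,
                exp_smul_collapse (by push_cast; ring)]
          · rw [hΨteq, hPtk, ContinuousLinearMap.comp_assoc, Emap_comp_q (hED.proj b hb),
              ContinuousLinearMap.comp_smul]
            refine le_trans (norm_exp_smul_le _ _) ?_
            calc Real.exp (-(α * (((k - b : ℤ)) : ℝ))) * ‖Ψ m b ∘L (1 - P b)‖
                ≤ Real.exp (-(α * (((k - b : ℤ)) : ℝ)))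
                    * (K * Real.exp (-α * ((b : ℝ) - (m : ℝ)))) :=
                  mul_le_mul_of_nonneg_left hb3 (Real.exp_pos _).le
              _ = K * Real.exp (-α * ((k : ℝ) - (m : ℝ))) := exp_mul_bound (by push_cast; ring)
      have pureCase : ∀ (p : Euc n →L[ℝ] Euc n) (m k : ℤ), m ≤ k → (p ∘L p = p) →
          ‖1 - p‖ ≤ K → (∀ i, m ≤ i → i < k → At i = Qmap α p) →
          Pt m = p → Pt k = p → Ψt m k = Emap α (k - m) p →
          (∀ x ∈ LinearMap.ker (Pt m : Euc n →ₗ[ℝ] Euc n), Ψt m k (Phi At k m x) = x) ∧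
          (∀ x ∈ LinearMap.ker (Pt k : Euc n →ₗ[ℝ] Euc n), Ψt m k x ∈ LinearMap.ker (Pt m : Euc n →ₗ[ℝ] Euc n) ∧
            Phi At k m (Ψt m k x) = x) ∧
          ‖Ψt m k ∘L (1 - Pt k)‖ ≤ K * Real.exp (-α * ((k : ℝ) - (m : ℝ))) := by
        intro p m k hmk hp hpK hreg hPm hPk hΨeq
        have hQ : ∀ x : Euc n, p x = 0 →
            Phi At k m x = Real.exp (α * ((k : ℝ) - (m : ℝ))) • x :=
          fun x hx => Phi_Q_apply_ker hp hmk hreg hx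
        refine ⟨?_, ?_, ?_⟩
        · intro x hx
          have hx0 : p x = 0 := by rw [hPm] at hx; exact LinearMap.mem_ker.mp hx
          rw [hΨeq, hQ _ hx0, map_smul, Emap_apply_ker hx0,
            exp_smul_collapse (by push_cast; ring)]
        · intro x hx
          have hx0 : p x = 0 := by rw [hPk] at hx; exact LinearMap.mem_ker.mp hx
          rw [hΨeq, Emap_apply_ker hx0]
          constructor
          · rw [hPm]
            exact Submodule.smul_mem _ _ (LinearMap.mem_ker.mpr hx0)
          · rw [map_smul, hQ _ hx0, exp_smul_collapse (by push_cast; ring)]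
        · rw [hΨeq, hPk, Emap_comp_q hp]
          refine le_trans (norm_exp_smul_le _ _) ?_
          calc Real.exp (-(α * (((k - m : ℤ)) : ℝ))) * ‖1 - p‖
              ≤ Real.exp (-(α * (((k - m : ℤ)) : ℝ))) * K :=
                mul_le_mul_of_nonneg_left hpK (Real.exp_pos _).le
            _ = K * Real.exp (-α * ((k : ℝ) - (m : ℝ))) := by
                rw [mul_comm]
                congr 1
                push_cast
                ring
      intro m _ k _ hmk
      rcases interval_trichotomy hJ m with hm | hm | hm
      · exact backI m hm k hmk
      · obtain ⟨a, ha, hamin⟩ := exists_least hne ⟨m, fun j hj => (hm j hj).le⟩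
        have hma : m < a := hm a ha
        have hPtm : Pt m = P a := by rw [hPtc, hcle a ha hamin m hma.le]
        have hmnJ : m ∉ J := fun h => absurd (hm m h) (lt_irrefl m)
        have hmex : ∃ j ∈ J, m < j := ⟨a, ha, hma⟩
        by_cases hka : k < a
        · have hknJ : k ∉ J := fun h => by have := hamin k h; omega
          have hkex : ∃ j ∈ J, k < j := ⟨a, ha, hka⟩
          have hΨteq : Ψt m k = Emap α (k - m) (P a) := by
            simp only [hΨtdef]
            rw [if_neg hmnJ, if_pos hmex, if_neg hknJ, if_pos hkex,
              hcle a ha hamin m hma.le]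
          exact pureCase (P a) m k hmk (hED.proj a ha) (hnormQ a ha)
            (fun i _ h2 => hAtQlt a ha hamin i (by omega)) hPtm
            (by rw [hPtc, hcle a ha hamin k hka.le]) hΨteq
        · push_neg at hka
          obtain ⟨bi1, bi2, bi3⟩ := backI a ha k hka
          have hΨteq : Ψt m k = Emap α (a - m) (P a) ∘L Ψt a k := by
            simp only [hΨtdef]
            rw [if_neg hmnJ, if_pos hmex, hcle a ha hamin m hma.le, if_pos ha]
            by_cases hk2 : k ∈ J
            · rw [if_pos hk2, if_pos hk2]
            · have hnex : ¬∃ j ∈ J, k < j := by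
                rintro ⟨j, hj, hkj⟩
                exact hk2 (hJ ha hj hka (by omega))
              rw [if_neg hk2, if_neg hnex, if_neg hk2]
          have hsplit : Phi At k m = Phi At k a ∘L Phi At a m := Phi_comp At hma.le hka
          refine ⟨?_, ?_, ?_⟩
          · intro x hx
            have hx0 : P a x = 0 := by rw [hPtm] at hx; exact LinearMap.mem_ker.mp hx
            have hQ : Phi At a m x = Real.exp (α * ((a : ℝ) - (m : ℝ))) • x :=
              Phi_Q_apply_ker (hED.proj a ha) hma.le
                (fun i _ h2 => hAtQlt a ha hamin i h2) hx0
            rw [hΨteq, hsplit]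
            simp only [ContinuousLinearMap.comp_apply]
            rw [hQ, map_smul (Phi At k a), map_smul (Ψt a k),
              bi1 x (by rw [hPtJ a ha]; exact LinearMap.mem_ker.mpr hx0),
              map_smul (Emap α (a - m) (P a)), Emap_apply_ker hx0,
              exp_smul_collapse (by push_cast; ring)]
          · intro x hx
            obtain ⟨hm1, hm2⟩ := bi2 x hx
            have hy0 : P a (Ψt a k x) = 0 := by
              rw [hPtJ a ha] at hm1
              exact LinearMap.mem_ker.mp hm1
            rw [hΨteq]
            simp only [ContinuousLinearMap.comp_apply]
            rw [Emap_apply_ker hy0]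
            refine ⟨?_, ?_⟩
            · rw [hPtm]
              exact Submodule.smul_mem _ _ (LinearMap.mem_ker.mpr hy0)
            · rw [hsplit]
              simp only [ContinuousLinearMap.comp_apply]
              rw [map_smul (Phi At a m),
                Phi_Q_apply_ker (hED.proj a ha) hma.le
                  (fun i _ h2 => hAtQlt a ha hamin i h2) hy0,
                exp_smul_collapse (by push_cast; ring), hm2]
          · rw [hΨteq]
            have hfact : (Emap α (a - m) (P a) ∘L Ψt a k) ∘L (1 - Pt k)
                = Real.exp (-(α * (((a - m : ℤ)) : ℝ))) • (Ψt a k ∘L (1 - Pt k)) := by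
              refine ContinuousLinearMap.ext fun v => ?_
              have hv : (1 - Pt k) v ∈ LinearMap.ker (Pt k : Euc n →ₗ[ℝ] Euc n) := by
                have h6 := DFunLike.congr_fun (hPtproj k) v
                simp only [ContinuousLinearMap.comp_apply] at h6
                rw [LinearMap.mem_ker]
                simp [h6]
              obtain ⟨hm1, _⟩ := bi2 _ hv
              have hy0 : P a (Ψt a k ((1 - Pt k) v)) = 0 := by
                rw [hPtJ a ha] at hm1
                exact LinearMap.mem_ker.mp hm1
              simp only [ContinuousLinearMap.comp_apply, ContinuousLinearMap.smul_apply]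
              rw [Emap_apply_ker hy0]
            rw [hfact]
            refine le_trans (norm_exp_smul_le _ _) ?_
            calc Real.exp (-(α * (((a - m : ℤ)) : ℝ))) * ‖Ψt a k ∘L (1 - Pt k)‖
                ≤ Real.exp (-(α * (((a - m : ℤ)) : ℝ)))
                    * (K * Real.exp (-α * ((k : ℝ) - (a : ℝ)))) :=
                  mul_le_mul_of_nonneg_left bi3 (Real.exp_pos _).le
              _ = K * Real.exp (-α * ((k : ℝ) - (m : ℝ))) := exp_mul_bound (by push_cast; ring)
      · obtain ⟨b, hb, hbmax⟩ := exists_greatest hne ⟨m, fun j hj => (hm j hj).le⟩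
        have hbm : b < m := hm b hb
        have hmnJ : m ∉ J := fun h => absurd (hm m h) (lt_irrefl m)
        have hnex : ¬∃ j ∈ J, m < j := by
          rintro ⟨j, hj, hmj⟩
          have := hm j hj
          omega
        have hΨteq : Ψt m k = Emap α (k - m) (P b) := by
          simp only [hΨtdef]
          rw [if_neg hmnJ, if_neg hnex, hcge b hb hbmax m hbm.le]
        exact pureCase (P b) m k hmk (hED.proj b hb) (hnormQ b hb)
          (fun i h1 _ => hAtQge b hb hbmax i (by omega))
          (by rw [hPtc, hcge b hb hbmax m hbm.le])
          (by rw [hPtc, hcge b hb hbmax k (by omega)]) hΨteq
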